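/- arXiv:1901.02449 — 5 statements merged into one kernel-verified Lean document; each statement's English description precedes it below -/
import Mathlib

section
/- Let ỹ₁,...,ỹ_N be pairwise distinct real numbers and v ∈ ℝ^N with v₁ + ... + v_N = 0. If ∑_{j,k} |ỹ_j - ỹ_k| v_j v_k = 0, then v = 0. -/
open scoped BigOperators

open Finset in
private lemma aux_sorted_case (N : ℕ) (z : Fin N → ℝ) (hz : StrictMono z)
    (w : Fin N → ℝ) (hw : ∑ j, w j = 0)
    (h : ∑ j, ∑ k, |z j - z k| * w j * w k = 0) : w = 0 := by
  rcases Nat.eq_zero_or_pos N with hN | hN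
  · subst hN; funext j; exact absurd j.isLt (by omega)
  -- extended sequence
  set g : ℕ → ℝ := fun i => z ⟨min i (N - 1), by omega⟩ with hg
  set a : Fin N → ℕ → ℝ := fun j i => if (j : ℕ) ≤ i then 1 else 0 with ha
  -- key identity
  have key_le : ∀ j k : Fin N, (j : ℕ) ≤ (k : ℕ) →
      |z j - z k| = ∑ i ∈ range (N - 1), (g (i + 1) - g i) * (a j i - a k i) ^ 2 := by
    intro j k hjk
    have hzjk : z j ≤ z k := hz.monotone (by exact_mod_cast hjk)
    have habs : |z j - z k| = z k - z j := by
      rw [abs_sub_comm]; exact abs_of_nonneg (by linarith)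
    have hcoef : ∀ i ∈ range (N - 1),
        (g (i + 1) - g i) * (a j i - a k i) ^ 2 =
        if i ∈ Ico (j : ℕ) (k : ℕ) then (g (i + 1) - g i) else 0 := by
      intro i _
      simp only [ha, mem_Ico]
      by_cases h1 : (j : ℕ) ≤ i <;> by_cases h2 : (k : ℕ) ≤ i
      · have h3 : ¬ i < (k : ℕ) := by omega
        simp [h1, h2, h3]
      · have h3 : i < (k : ℕ) := by omega
        simp [h1, h2, h3]
      · exact absurd hjk (by omega)
      · have h3 : ¬ i < (k : ℕ) ∨ ¬ (j : ℕ) ≤ i := Or.inr h1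
        simp [h1, h2]
    rw [Finset.sum_congr rfl hcoef, Finset.sum_ite_mem]
    have hsets : range (N - 1) ∩ Ico (j : ℕ) (k : ℕ) = Ico (j : ℕ) (k : ℕ) := by
      apply Finset.inter_eq_right.mpr
      intro i hi
      simp only [mem_Ico] at hi
      simp only [mem_range]
      have := k.isLt; omega
    rw [hsets, Finset.sum_Ico_eq_sub _ hjk, Finset.sum_range_sub, Finset.sum_range_sub]
    have hgj : g (j : ℕ) = z j := by
      simp only [hg]; congr 1; exact Fin.ext (by simp only; have := j.isLt; omega)
    have hgk : g (k : ℕ) = z k := by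
      simp only [hg]; congr 1; exact Fin.ext (by simp only; have := k.isLt; omega)
    rw [hgj, hgk, habs]; ring
  have key : ∀ j k : Fin N,
      |z j - z k| = ∑ i ∈ range (N - 1), (g (i + 1) - g i) * (a j i - a k i) ^ 2 := by
    intro j k
    rcases le_total (j : ℕ) (k : ℕ) with hjk | hkj
    · exact key_le j k hjk
    · rw [abs_sub_comm, key_le k j hkj]
      exact Finset.sum_congr rfl fun i _ => by ring
  -- partial sums
  set S : ℕ → ℝ := fun i => ∑ j, a j i * w j with hS
  -- rewrite the quadratic form
  have hQ : ∑ j, ∑ k, |z j - z k| * w j * w k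
      = ∑ i ∈ range (N - 1), (g (i + 1) - g i) * (-2 * (S i) ^ 2) := by
    have step1 : ∑ j, ∑ k, |z j - z k| * w j * w k
        = ∑ i ∈ range (N - 1), ∑ j, ∑ k,
            (g (i + 1) - g i) * ((a j i - a k i) ^ 2 * w j * w k) := by
      calc ∑ j, ∑ k, |z j - z k| * w j * w k
          = ∑ j, ∑ k, ∑ i ∈ range (N - 1),
              (g (i + 1) - g i) * ((a j i - a k i) ^ 2 * w j * w k) := by
            refine Finset.sum_congr rfl fun j _ => Finset.sum_congr rfl fun k _ => ?_
            rw [key j k, Finset.sum_mul, Finset.sum_mul]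
            exact Finset.sum_congr rfl fun i _ => by ring
        _ = ∑ j, ∑ i ∈ range (N - 1), ∑ k,
              (g (i + 1) - g i) * ((a j i - a k i) ^ 2 * w j * w k) :=
            Finset.sum_congr rfl fun j _ => Finset.sum_comm
        _ = ∑ i ∈ range (N - 1), ∑ j, ∑ k,
              (g (i + 1) - g i) * ((a j i - a k i) ^ 2 * w j * w k) :=
            Finset.sum_comm
    rw [step1]
    refine Finset.sum_congr rfl fun i _ => ?_
    simp_rw [← Finset.mul_sum]
    congr 1
    have expand : ∀ j k : Fin N, (a j i - a k i) ^ 2 * w j * w k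
        = (a j i) ^ 2 * w j * w k - 2 * ((a j i * w j) * (a k i * w k))
          + w j * ((a k i) ^ 2 * w k) := fun j k => by ring
    simp_rw [expand, Finset.sum_add_distrib, Finset.sum_sub_distrib,
      ← Finset.mul_sum, ← Finset.sum_mul, hw]
    simp only [Finset.sum_const_zero, mul_zero, zero_mul, zero_sub, zero_add]
    have hSi : S i = ∑ j, a j i * w j := rfl
    rw [hSi]; ring
  rw [hQ] at h
  have hgap : ∀ i ∈ range (N - 1), g i < g (i + 1) := by
    intro i hi
    simp only [mem_range] at hi
    apply hz
    simp only [Fin.lt_def]; omega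
  have hterm : ∀ i ∈ range (N - 1), (0:ℝ) ≤ (g (i + 1) - g i) * (2 * (S i) ^ 2) := by
    intro i hi
    have := hgap i hi
    have := sq_nonneg (S i)
    nlinarith
  have hsum0 : ∑ i ∈ range (N - 1), (g (i + 1) - g i) * (2 * (S i) ^ 2) = 0 := by
    have heq : ∑ i ∈ range (N - 1), (g (i + 1) - g i) * (2 * (S i) ^ 2)
        = - ∑ i ∈ range (N - 1), (g (i + 1) - g i) * (-2 * (S i) ^ 2) := by
      rw [← Finset.sum_neg_distrib]
      exact Finset.sum_congr rfl fun i _ => by ring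
    rw [heq, h, neg_zero]
  have hSzero : ∀ i ∈ range (N - 1), S i = 0 := by
    intro i hi
    have h0 := (Finset.sum_eq_zero_iff_of_nonneg hterm).mp hsum0 i hi
    have hgi := hgap i hi
    have h2 : 2 * (S i) ^ 2 = 0 := by
      rcases mul_eq_zero.mp h0 with h' | h'
      · linarith
      · exact h'
    nlinarith [sq_nonneg (S i)]
  have hSall : ∀ i : ℕ, S i = 0 := by
    intro i
    rcases lt_or_ge i (N - 1) with hi | hi
    · exact hSzero i (mem_range.mpr hi)
    · have heq : S i = ∑ j, w j := by
        apply Finset.sum_congr rfl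
        intro j _
        have hji : (j : ℕ) ≤ i := by have := j.isLt; omega
        simp [ha, hji]
      rw [heq, hw]
  -- extract w = 0 by strong induction
  have main : ∀ m : ℕ, ∀ j : Fin N, (j : ℕ) = m → w j = 0 := by
    intro m
    induction m using Nat.strong_induction_on with
    | _ m ih =>
      intro j hj
      have hSj : S (j : ℕ) = 0 := hSall _
      have hSw : S (j : ℕ) = w j := by
        simp only [hS]
        have hterm : ∀ k : Fin N, a k (j : ℕ) * w k = if k = j then w k else 0 := by
          intro k
          by_cases hk : k = j
          · subst hk; simp [ha]
          · by_cases hkj : (k : ℕ) ≤ (j : ℕ)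
            · have hlt : (k : ℕ) < m := by
                rcases lt_or_eq_of_le hkj with h' | h'
                · omega
                · exact absurd (Fin.ext h') hk
              rw [ih _ hlt k rfl]
              simp [hk]
            · simp [ha, hkj, hk]
        simp_rw [hterm]
        rw [Finset.sum_ite_eq' Finset.univ j (fun k => w k)]
        simp
      rw [hSw] at hSj
      exact hSj
  funext j
  exact main (j : ℕ) j rfl

/-- Strict negativity in dimension one: if `ỹ₁,…,ỹ_N` are pairwise distinct reals and
`v` is mean-zero with `∑_{j,k} |ỹ_j - ỹ_k| v_j v_k = 0`, then `v = 0`. -/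
theorem distance_quadratic_form_eq_zero_iff (N : ℕ) (ty : Fin N → ℝ)
    (hty : Function.Injective ty)
    (v : Fin N → ℝ) (hv : ∑ j, v j = 0)
    (h : ∑ j, ∑ k, |ty j - ty k| * v j * v k = 0) :
    v = 0 := by
  set σ := Tuple.sort ty with hσ
  have hmono : StrictMono (ty ∘ σ) :=
    (Tuple.monotone_sort ty).strictMono_of_injective (hty.comp σ.injective)
  have hw : ∑ j, v (σ j) = 0 := by rw [Equiv.sum_comp σ v, hv]
  have hq : ∑ j, ∑ k, |ty (σ j) - ty (σ k)| * v (σ j) * v (σ k) = 0 := by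
    calc ∑ j, ∑ k, |ty (σ j) - ty (σ k)| * v (σ j) * v (σ k)
        = ∑ j, ∑ k, |ty (σ j) - ty k| * v (σ j) * v k := by
          refine Finset.sum_congr rfl fun j _ => ?_
          exact Equiv.sum_comp σ (fun k => |ty (σ j) - ty k| * v (σ j) * v k)
      _ = ∑ j, ∑ k, |ty j - ty k| * v j * v k :=
          Equiv.sum_comp σ (fun j => ∑ k, |ty j - ty k| * v j * v k)
      _ = 0 := h
  have hz0 := aux_sorted_case N (ty ∘ σ) hmono (fun j => v (σ j)) hw hq
  funext x
  have := congrFun hz0 (σ.symm x)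
  simpa using this
end

section
/- Let v ∈ ℝ^N with v₁ + ... + v_N = 0 and let y₁,...,y_N be pairwise distinct points in ℝ³. If ∑_{j,k} |y_j - y_k| v_j v_k = 0, then v = 0. -/
open MeasureTheory Real
open scoped RealInnerProductSpace BigOperators


lemma indicator_eq_sq (a b : ℝ) :
    (fun t : ℝ => ((if a ≤ t then (1:ℝ) else 0) - (if b ≤ t then 1 else 0))^2)
      = Set.indicator (Set.Ico (min a b) (max a b)) (fun _ => (1:ℝ)) := by
  funext t
  by_cases h1 : a ≤ t <;> by_cases h2 : b ≤ t <;>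
    simp [Set.indicator_apply, Set.mem_Ico, h1, h2, min_le_iff, lt_max_iff, not_le.mp,
      le_of_not_ge]

lemma abs_eq_integral_sq (a b : ℝ) :
    ∫ t : ℝ, ((if a ≤ t then (1:ℝ) else 0) - (if b ≤ t then 1 else 0))^2 = |a - b| := by
  rw [indicator_eq_sq, integral_indicator_const (1:ℝ) measurableSet_Ico]
  simp [Real.volume_Ico, ENNReal.toReal_ofReal (sub_nonneg.2 (min_le_max (a := a) (b := b))),
    max_sub_min_eq_abs, abs_sub_comm]

lemma integrable_sq_ind (a b : ℝ) :
    Integrable (fun t : ℝ => ((if a ≤ t then (1:ℝ) else 0) - (if b ≤ t then 1 else 0))^2) := by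
  rw [indicator_eq_sq]
  rw [integrable_indicator_iff measurableSet_Ico]
  exact integrableOn_const measure_Ico_lt_top.ne

section oneD
variable {N : ℕ} (a v : Fin N → ℝ)

lemma pointwise_key (hv : ∑ j, v j = 0) (t : ℝ) :
    ∑ p : Fin N × Fin N,
      ((if a p.1 ≤ t then (1:ℝ) else 0) - (if a p.2 ≤ t then 1 else 0))^2 * (v p.1 * v p.2)
      = -2 * (∑ j, v j * (if a j ≤ t then (1:ℝ) else 0))^2 := by
  rw [Fintype.sum_prod_type]
  have hsq : ∀ j, (if a j ≤ t then (1:ℝ) else 0)^2 = (if a j ≤ t then (1:ℝ) else 0) := by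
    intro j; by_cases h : a j ≤ t <;> simp [h]
  have hm : ∀ j k, ((if a j ≤ t then (1:ℝ) else 0) - (if a k ≤ t then 1 else 0))^2 * (v j * v k)
      = v k * (v j * (if a j ≤ t then (1:ℝ) else 0))
        + v j * (v k * (if a k ≤ t then (1:ℝ) else 0))
        - 2 * ((v j * (if a j ≤ t then (1:ℝ) else 0)) * (v k * (if a k ≤ t then (1:ℝ) else 0))) := by
    intro j k; rw [sub_sq, hsq, hsq]; ring
  simp_rw [hm, Finset.sum_sub_distrib, Finset.sum_add_distrib, ← Finset.mul_sum,
    ← Finset.sum_mul, hv]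
  simp [sq]

lemma oneD_key (hv : ∑ j, v j = 0) :
    ∑ j, ∑ k, |a j - a k| * v j * v k
      = -2 * ∫ t : ℝ, (∑ j, v j * (if a j ≤ t then (1:ℝ) else 0))^2 := by
  have hint : ∀ p : Fin N × Fin N, Integrable (fun t : ℝ =>
      ((if a p.1 ≤ t then (1:ℝ) else 0) - (if a p.2 ≤ t then 1 else 0))^2 * (v p.1 * v p.2)) :=
    fun p => (integrable_sq_ind _ _).mul_const _
  have h1 : ∑ j, ∑ k, |a j - a k| * v j * v k
      = ∑ p : Fin N × Fin N, ∫ t : ℝ,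
        ((if a p.1 ≤ t then (1:ℝ) else 0) - (if a p.2 ≤ t then 1 else 0))^2 * (v p.1 * v p.2) := by
    rw [Fintype.sum_prod_type]
    refine Finset.sum_congr rfl fun j _ => Finset.sum_congr rfl fun k _ => ?_
    rw [integral_mul_const, abs_eq_integral_sq, mul_assoc]
  rw [h1, ← integral_finset_sum _ fun p _ => hint p]
  simp_rw [pointwise_key a v hv]
  exact integral_const_mul _ _

lemma integrable_S_sq (hv : ∑ j, v j = 0) :
    Integrable (fun t : ℝ => (∑ j, v j * (if a j ≤ t then (1:ℝ) else 0))^2) := by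
  have hint : Integrable (fun t : ℝ => ∑ p : Fin N × Fin N,
        ((if a p.1 ≤ t then (1:ℝ) else 0) - (if a p.2 ≤ t then 1 else 0))^2 * (v p.1 * v p.2)) :=
      integrable_finset_sum _ fun p _ => (integrable_sq_ind _ _).mul_const _
  refine (hint.const_mul (-(1/2):ℝ)).congr ?_
  filter_upwards with t
  have := pointwise_key a v hv t
  linarith

section strict
variable {N : ℕ} (a v : Fin N → ℝ)

variable {N : ℕ} (a v : Fin N → ℝ)

lemma oneD_strict (ha : Function.Injective a) (hv : ∑ j, v j = 0)
    (h : ∑ j, ∑ k, |a j - a k| * v j * v k = 0) : v = 0 := by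
  set S : ℝ → ℝ := fun t => ∑ j, v j * (if a j ≤ t then (1:ℝ) else 0) with hS
  have hI0 : ∫ t : ℝ, (S t)^2 = 0 := by
    have hkey := oneD_key a v hv; rw [h] at hkey; linarith
  have haeS : ∀ᵐ t : ℝ, S t = 0 := by
    have h2 := (integral_eq_zero_iff_of_nonneg (fun t => sq_nonneg (S t))
      (integrable_S_sq a v hv)).1 hI0
    filter_upwards [h2] with t ht
    exact (pow_eq_zero_iff two_ne_zero).1 ht
  have hex : ∀ r δ : ℝ, 0 < δ → ∃ t, r ≤ t ∧ t < r + δ ∧ S t = 0 := by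
    intro r δ hδ
    by_contra hcon
    push_neg at hcon
    have hsub : Set.Ico r (r+δ) ⊆ {t | ¬ S t = 0} := fun t ht => hcon t ht.1 ht.2
    have h0 : volume (Set.Ico r (r+δ)) = 0 := measure_mono_null hsub (ae_iff.1 haeS)
    rw [Real.volume_Ico] at h0
    simp only [ENNReal.ofReal_eq_zero] at h0
    linarith
  have hSfil : ∀ t, S t = ∑ k ∈ Finset.univ.filter (fun k => a k ≤ t), v k := by
    intro t; rw [hS, Finset.sum_filter]
    simp [mul_ite]
  have hP : ∀ j, ∑ k ∈ Finset.univ.filter (fun k => a k ≤ a j), v k = 0 := by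
    intro j
    by_cases hs : (Finset.univ.filter (fun k => a j < a k)).Nonempty
    · set δ := (Finset.univ.filter (fun k => a j < a k)).inf' hs (fun k => a k - a j) with hδdef
      have hδpos : 0 < δ := by
        rw [hδdef, Finset.lt_inf'_iff]
        intro k hk; rw [Finset.mem_filter] at hk; linarith [hk.2]
      obtain ⟨t, ht1, ht2, ht3⟩ := hex (a j) δ hδpos
      have hfil : Finset.univ.filter (fun k => a k ≤ t)
          = Finset.univ.filter (fun k => a k ≤ a j) := by
        apply Finset.filter_congr; intro k _
        constructor
        · intro hkt; by_contra hk; push_neg at hk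
          have : δ ≤ a k - a j :=
            Finset.inf'_le _ (Finset.mem_filter.2 ⟨Finset.mem_univ k, hk⟩)
          linarith
        · intro hk; exact hk.trans ht1
      rw [← hfil, ← hSfil t]; exact ht3
    · rw [Finset.filter_true_of_mem, ← hv]
      intro k _
      by_contra hk
      exact hs ⟨k, Finset.mem_filter.2 ⟨Finset.mem_univ _, not_le.1 hk⟩⟩
  have hQ : ∀ j, ∑ k ∈ Finset.univ.filter (fun k => a k < a j), v k = 0 := by
    intro j
    by_cases hs : (Finset.univ.filter (fun k => a k < a j)).Nonempty
    · set δ := (Finset.univ.filter (fun k => a k < a j)).inf' hs (fun k => a j - a k) with hδdef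
      have hδpos : 0 < δ := by
        rw [hδdef, Finset.lt_inf'_iff]
        intro k hk; rw [Finset.mem_filter] at hk; linarith [hk.2]
      obtain ⟨t, ht1, ht2, ht3⟩ := hex (a j - δ) δ hδpos
      have ht2' : t < a j := by linarith
      have hfil : Finset.univ.filter (fun k => a k ≤ t)
          = Finset.univ.filter (fun k => a k < a j) := by
        apply Finset.filter_congr; intro k _
        constructor
        · intro hkt; exact lt_of_le_of_lt hkt ht2'
        · intro hk
          have : δ ≤ a j - a k :=
            Finset.inf'_le _ (Finset.mem_filter.2 ⟨Finset.mem_univ k, hk⟩)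
          linarith
      rw [← hfil, ← hSfil t]; exact ht3
    · rw [Finset.filter_false_of_mem, Finset.sum_empty]
      intro k _
      exact fun hk => hs ⟨k, Finset.mem_filter.2 ⟨Finset.mem_univ _, hk⟩⟩
  funext j
  have hins : Finset.univ.filter (fun k => a k ≤ a j)
      = insert j (Finset.univ.filter (fun k => a k < a j)) := by
    ext k
    simp only [Finset.mem_filter, Finset.mem_insert, Finset.mem_univ, true_and]
    constructor
    · intro hk
      rcases lt_or_eq_of_le hk with h'|h'
      · exact Or.inr h'
      · exact Or.inl (ha h')
    · rintro (rfl|h')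
      exacts [le_refl _, le_of_lt h']
  have hj : j ∉ Finset.univ.filter (fun k => a k < a j) := by simp
  have hfin := hP j
  rw [hins, Finset.sum_insert hj, hQ j] at hfin
  simpa using hfin
end strict


noncomputable section
abbrev E3 := EuclideanSpace ℝ (Fin 3)

lemma integrable_gauss_half : Integrable (fun z : E3 => rexp (-(1/2) * ‖z‖^2)) := by
  have h := (GaussianFourier.integrable_cexp_neg_mul_sq_norm_add (V := E3) (b := (1/2:ℂ))
    (by norm_num) 0 0).norm
  refine h.congr ?_
  filter_upwards with z
  have : ((-(1/2) * (‖z‖:ℂ)^2 + 0 * ((inner ℝ (0:E3) z : ℝ):ℂ)).re) = -(1/2) * ‖z‖^2 := by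
    simp [← Complex.ofReal_pow]
  simp only [Complex.norm_exp, this]

lemma integrable_inner_gauss (x : E3) :
    Integrable (fun z : E3 => |⟪x, z⟫| * rexp (-‖z‖^2)) := by
  refine Integrable.mono' (integrable_gauss_half.const_mul ‖x‖) ?_ ?_
  · exact ((Continuous.inner continuous_const continuous_id).abs.mul
      ((continuous_norm.pow 2).neg.rexp)).aestronglyMeasurable
  · filter_upwards with z
    have h1 : |⟪x, z⟫| ≤ ‖x‖ * ‖z‖ := abs_real_inner_le_norm x z
    have h2 : ‖z‖ * rexp (-‖z‖^2) ≤ rexp (-(1/2) * ‖z‖^2) := by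
      have h3 : ‖z‖ ≤ rexp ((1/2) * ‖z‖^2) := by
        have := Real.add_one_le_exp ((1/2) * ‖z‖^2)
        nlinarith [norm_nonneg z, sq_nonneg (‖z‖ - 1)]
      calc ‖z‖ * rexp (-‖z‖^2) ≤ rexp ((1/2) * ‖z‖^2) * rexp (-‖z‖^2) := by
            exact mul_le_mul_of_nonneg_right h3 (Real.exp_nonneg _)
        _ = rexp (-(1/2) * ‖z‖^2) := by rw [← Real.exp_add]; ring_nf
    have hexp : (0:ℝ) ≤ rexp (-‖z‖^2) := Real.exp_nonneg _
    have : ‖|⟪x, z⟫| * rexp (-‖z‖^2)‖ = |⟪x, z⟫| * rexp (-‖z‖^2) := by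
      rw [Real.norm_eq_abs, abs_mul, abs_abs, abs_of_nonneg hexp]
    rw [this]
    calc |⟪x, z⟫| * rexp (-‖z‖^2) ≤ (‖x‖ * ‖z‖) * rexp (-‖z‖^2) :=
          mul_le_mul_of_nonneg_right h1 hexp
      _ = ‖x‖ * (‖z‖ * rexp (-‖z‖^2)) := by ring
      _ ≤ ‖x‖ * rexp (-(1/2) * ‖z‖^2) :=
          mul_le_mul_of_nonneg_left h2 (norm_nonneg x)

def gaussConst : ℝ := ∫ z : E3, |⟪(EuclideanSpace.single 0 (1:ℝ) : E3), z⟫| * rexp (-‖z‖^2)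

lemma gauss_inner_eq (x : E3) :
    ∫ z : E3, |⟪x, z⟫| * rexp (-‖z‖^2) = gaussConst * ‖x‖ := by
  rcases eq_or_ne x 0 with rfl | hx
  · simp
  · set u₀ : E3 := EuclideanSpace.single 0 (1:ℝ) with hu₀
    have hu₀n : ‖u₀‖ = 1 := by simp [hu₀, EuclideanSpace.norm_single]
    set u : E3 := ‖x‖⁻¹ • x with hu
    have hun : ‖u‖ = 1 := norm_smul_inv_norm hx
    have hx' : x = ‖x‖ • u := by
      rw [hu, smul_smul, mul_inv_cancel₀ (norm_ne_zero_iff.2 hx), one_smul]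
    set e : E3 ≃ₗᵢ[ℝ] E3 := Submodule.reflection (ℝ ∙ (u₀ - u))ᗮ with he
    have heu : e u₀ = u := Submodule.reflection_sub (by rw [hu₀n, hun])
    have step1 : ∫ z : E3, |⟪x, z⟫| * rexp (-‖z‖^2)
        = ‖x‖ * ∫ z : E3, |⟪u, z⟫| * rexp (-‖z‖^2) := by
      rw [← integral_const_mul]
      congr 1; funext z
      have hinner : ⟪x, z⟫ = ‖x‖ * ⟪u, z⟫ := by
        conv_lhs => rw [hx']
        rw [real_inner_smul_left]
      rw [hinner, abs_mul, abs_of_nonneg (norm_nonneg x)]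
      ring
    have step2 : ∫ z : E3, |⟪u, z⟫| * rexp (-‖z‖^2)
        = ∫ z : E3, |⟪u₀, z⟫| * rexp (-‖z‖^2) := by
      rw [← e.measurePreserving.integral_comp e.toHomeomorph.measurableEmbedding
        (fun z => |⟪u, z⟫| * rexp (-‖z‖^2))]
      congr 1; funext w
      rw [← heu, e.inner_map_map, e.norm_map]
    rw [step1, step2, gaussConst, ← hu₀]
    ring
end

/-- Strict negativity: if `y₁,…,y_N` are pairwise distinct points of `ℝ³` and `v` is a
mean-zero vector with `∑_{j,k} |y_j - y_k| v_j v_k = 0`, then `v = 0`. -/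
theorem distance_quadratic_form_eq_zero_iff_three_dim (N : ℕ)
    (y : Fin N → EuclideanSpace ℝ (Fin 3)) (hy : Function.Injective y)
    (v : Fin N → ℝ) (hv : ∑ j, v j = 0)
    (h : ∑ j, ∑ k, dist (y j) (y k) * v j * v k = 0) :
    v = 0 := by
  classical
  set F : Fin N × Fin N → E3 → ℝ := fun p z =>
    (|⟪y p.1 - y p.2, z⟫| * rexp (-‖z‖^2)) * (v p.1 * v p.2) with hF
  have hFint : ∀ p : Fin N × Fin N, Integrable (F p) :=
    fun p => (integrable_inner_gauss _).mul_const _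
  have hsum_int : Integrable (fun z : E3 => ∑ p : Fin N × Fin N, F p z) :=
    integrable_finset_sum _ fun p _ => hFint p
  have hI : ∫ z : E3, ∑ p : Fin N × Fin N, F p z = 0 := by
    rw [integral_finset_sum _ fun p _ => hFint p]
    have hone : ∀ p : Fin N × Fin N, ∫ z : E3, F p z
        = gaussConst * (dist (y p.1) (y p.2) * v p.1 * v p.2) := by
      intro p
      rw [hF]
      rw [integral_mul_const, gauss_inner_eq, dist_eq_norm]
      ring
    rw [Finset.sum_congr rfl fun p _ => hone p, ← Finset.mul_sum]
    rw [show ∑ p : Fin N × Fin N, dist (y p.1) (y p.2) * v p.1 * v p.2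
        = ∑ j, ∑ k, dist (y j) (y k) * v j * v k from Fintype.sum_prod_type _]
    rw [h, mul_zero]
  set g : E3 → ℝ := fun z => ∑ j, ∑ k, |⟪y j - y k, z⟫| * v j * v k with hg
  have hgF : ∀ z, ∑ p : Fin N × Fin N, F p z = g z * rexp (-‖z‖^2) := by
    intro z
    rw [hg, hF, Fintype.sum_prod_type, Finset.sum_mul]
    refine Finset.sum_congr rfl fun j _ => ?_
    rw [Finset.sum_mul]
    refine Finset.sum_congr rfl fun k _ => ?_
    ring
  have hg_nonpos : ∀ z, g z ≤ 0 := by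
    intro z
    have hform : g z = ∑ j, ∑ k, |⟪y j, z⟫ - ⟪y k, z⟫| * v j * v k := by
      simp_rw [hg, inner_sub_left]
    rw [hform, oneD_key _ v hv]
    have := integral_nonneg (μ := volume)
        (f := fun t => (∑ j, v j * (if (⟪y j, z⟫ : ℝ) ≤ t then (1:ℝ) else 0))^2)
      (fun t => sq_nonneg (∑ j, v j * (if (⟪y j, z⟫ : ℝ) ≤ t then (1:ℝ) else 0)))
    linarith
  have hge_int : Integrable (fun z : E3 => g z * rexp (-‖z‖^2)) :=
    hsum_int.congr (Filter.Eventually.of_forall hgF)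
  have haeg : ∀ᵐ z : E3, g z = 0 := by
    have hnn : 0 ≤ fun z : E3 => -(g z * rexp (-‖z‖^2)) := by
      intro z
      simp only [Pi.zero_apply, neg_nonneg]
      exact mul_nonpos_of_nonpos_of_nonneg (hg_nonpos z) (Real.exp_nonneg _)
    have h0 : ∫ z : E3, -(g z * rexp (-‖z‖^2)) = 0 := by
      rw [integral_neg, ← integral_congr_ae (Filter.Eventually.of_forall hgF), hI, neg_zero]
    have := (integral_eq_zero_iff_of_nonneg hnn hge_int.neg).1 h0
    filter_upwards [this] with z hz
    simp only [Pi.zero_apply, neg_eq_zero] at hz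
    rcases mul_eq_zero.1 hz with h' | h'
    · exact h'
    · exact absurd h' (Real.exp_ne_zero _)
  have haeD : ∀ᵐ z : E3, ∀ j k : Fin N, j ≠ k → ⟪y j - y k, z⟫ ≠ 0 := by
    rw [MeasureTheory.ae_all_iff]
    intro j
    rw [MeasureTheory.ae_all_iff]
    intro k
    by_cases hjk : j = k
    · exact Filter.Eventually.of_forall fun z hne => absurd hjk hne
    · have hw : y j - y k ≠ 0 := sub_ne_zero.2 fun hh => hjk (hy hh)
      have hset : {z : E3 | ⟪y j - y k, z⟫ = 0} = ((ℝ ∙ (y j - y k))ᗮ : Set E3) := by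
        ext z
        simp [Submodule.mem_orthogonal_singleton_iff_inner_right]
      have hnull : volume {z : E3 | ⟪y j - y k, z⟫ = 0} = 0 := by
        rw [hset]
        refine Measure.addHaar_submodule _ _ fun htop => hw ?_
        have hmem : y j - y k ∈ (ℝ ∙ (y j - y k))ᗮ := htop ▸ Submodule.mem_top
        exact inner_self_eq_zero.1 (Submodule.mem_orthogonal_singleton_iff_inner_right.1 hmem)
      refine ae_iff.2 (measure_mono_null (fun z hz => ?_) hnull)
      push_neg at hz
      exact hz.2
  obtain ⟨z, hz1, hz2⟩ := (haeg.and haeD).exists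
  have hainj : Function.Injective (fun j => (⟪y j, z⟫ : ℝ)) := by
    intro j k hjk
    by_contra hne
    refine hz2 j k hne ?_
    rw [inner_sub_left]
    simpa [sub_eq_zero] using hjk
  refine oneD_strict (fun j => (⟪y j, z⟫ : ℝ)) v hainj hv ?_
  have hform : g z = ∑ j, ∑ k, |⟪y j, z⟫ - ⟪y k, z⟫| * v j * v k := by
    simp_rw [hg, inner_sub_left]
  rw [← hform]
  exact hz1
end oneD
end

section
/- Let A be a closed operator on a Hilbert space H and P a projection such that A + P has a bounded inverse. Then A has a bounded inverse if and only if B := P − P(A+P)^{-1}P has a bounded inverse on PH, and in that case A^{-1} = (A+P)^{-1} + (A+P)^{-1} P (B ↾ PH)^{-1} P (A+P)^{-1}. -/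
/-- Forward direction of Jensen–Nenciu, as a pure ring identity. -/
lemma jn_fwd {α : Type*} [Ring α] (A P Q S : α) (hP : P*P = P)
    (hQ1 : (A+P)*Q = 1) (hQ2 : Q*(A+P) = 1) (hS1 : A*S = 1) (hS2 : S*A = 1) :
    P*(P + P*S*P)*P = P + P*S*P ∧
    (P - P*Q*P)*(P + P*S*P) = P ∧
    (P + P*S*P)*(P - P*Q*P) = P := by
  have hAQ : A*Q = 1 - P*Q := eq_sub_of_add_eq (by rw [← add_mul]; exact hQ1)
  have hQA : Q*A = 1 - Q*P := eq_sub_of_add_eq (by rw [← mul_add]; exact hQ2)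
  have key : Q*P*S = S - Q := by
    have h : Q*A*S = Q := by rw [mul_assoc, hS1, mul_one]
    calc Q*P*S = (1 - Q*A)*S := by rw [hQA]; noncomm_ring
    _ = S - Q := by rw [sub_mul, one_mul, h]
  have key' : S*P*Q = S - Q := by
    have h : S*(A*Q) = Q := by rw [← mul_assoc, hS2, one_mul]
    calc S*P*Q = S*(1 - A*Q) := by rw [hAQ]; noncomm_ring
    _ = S - Q := by rw [mul_sub, mul_one, h]
  refine ⟨?_, ?_, ?_⟩
  · calc P*(P + P*S*P)*P = P*P*P + (P*P)*S*(P*P) := by noncomm_ring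
    _ = P + P*S*P := by simp only [hP]
  · calc (P - P*Q*P)*(P + P*S*P)
        = P*P + (P*P)*S*P - P*Q*(P*P) - P*Q*((P*P)*S)*P := by noncomm_ring
    _ = P + P*S*P - P*Q*P - P*Q*(P*S)*P := by simp only [hP]
    _ = P + P*S*P - P*Q*P - P*(Q*P*S)*P := by noncomm_ring
    _ = P + P*S*P - P*Q*P - P*(S - Q)*P := by rw [key]
    _ = P := by noncomm_ring
  · calc (P + P*S*P)*(P - P*Q*P)
        = P*P - (P*P)*Q*P + P*S*(P*P) - P*S*((P*P)*Q)*P := by noncomm_ring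
    _ = P - P*Q*P + P*S*P - P*S*(P*Q)*P := by simp only [hP]
    _ = P - P*Q*P + P*S*P - P*(S*P*Q)*P := by noncomm_ring
    _ = P - P*Q*P + P*S*P - P*(S - Q)*P := by rw [key']
    _ = P := by noncomm_ring

/-- Backward direction of Jensen–Nenciu, as a pure ring identity. -/
lemma jn_bwd {α : Type*} [Ring α] (A P Q C : α) (hP : P*P = P)
    (hQ1 : (A+P)*Q = 1) (hQ2 : Q*(A+P) = 1)
    (hC : P*C*P = C) (hBC : (P - P*Q*P)*C = P) (hCB : C*(P - P*Q*P) = P) :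
    A*(Q + Q*C*Q) = 1 ∧ (Q + Q*C*Q)*A = 1 := by
  have hAQ : A*Q = 1 - P*Q := eq_sub_of_add_eq (by rw [← add_mul]; exact hQ1)
  have hQA : Q*A = 1 - Q*P := eq_sub_of_add_eq (by rw [← mul_add]; exact hQ2)
  have hPC : P*C = C := by
    conv_lhs => rw [← hC]
    calc P*(P*C*P) = (P*P)*C*P := by noncomm_ring
    _ = C := by rw [hP, hC]
  have hCP : C*P = C := by
    conv_lhs => rw [← hC]
    calc (P*C*P)*P = P*C*(P*P) := by noncomm_ring
    _ = C := by rw [hP, hC]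
  have hAQC : A*Q*C = P := by
    calc A*Q*C = (1 - P*Q)*C := by rw [hAQ]
    _ = P*C - P*Q*(P*C) := by rw [hPC]; noncomm_ring
    _ = (P - P*Q*P)*C := by rw [← hPC]; noncomm_ring
    _ = P := hBC
  have hCQA : C*(Q*A) = P := by
    calc C*(Q*A) = C*(1 - Q*P) := by rw [hQA]
    _ = C*P - (C*P)*(Q*P) := by rw [hCP]; noncomm_ring
    _ = C*(P - P*Q*P) := by rw [← hCP]; noncomm_ring
    _ = P := hCB
  constructor
  · calc A*(Q + Q*C*Q) = A*Q + (A*Q*C)*Q := by noncomm_ring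
    _ = A*Q + P*Q := by rw [hAQC]
    _ = 1 - P*Q + P*Q := by rw [hAQ]
    _ = 1 := by noncomm_ring
  · calc (Q + Q*C*Q)*A = Q*A + Q*(C*(Q*A)) := by noncomm_ring
    _ = Q*A + Q*P := by rw [hCQA]
    _ = 1 - Q*P + Q*P := by rw [hQA]
    _ = 1 := by noncomm_ring

/-- Jensen–Nenciu lemma. Let `A` be a (bounded, hence closed) operator on a Hilbert
space `H` and `P` a projection such that `A + P` has a bounded inverse `Q`.  Then `A`
has a bounded inverse if and only if `B := P - P Q P` has a bounded inverse on the
subspace `P H` (expressed by an operator `C` with `C = P C P`, `B C = P = C B`), and in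
that case `A⁻¹ = Q + Q C Q` (`= (A+P)⁻¹ + (A+P)⁻¹ P (B ↾ PH)⁻¹ P (A+P)⁻¹`). -/
theorem jensen_nenciu {H : Type*} [NormedAddCommGroup H] [InnerProductSpace ℂ H]
    [CompleteSpace H] (A P Q : H →L[ℂ] H)
    (hP : P ∘L P = P)
    (hQ1 : (A + P) ∘L Q = 1) (hQ2 : Q ∘L (A + P) = 1) :
    ((∃ R : H →L[ℂ] H, A ∘L R = 1 ∧ R ∘L A = 1) ↔
      (∃ C : H →L[ℂ] H, P ∘L C ∘L P = C ∧
        (P - P ∘L Q ∘L P) ∘L C = P ∧ C ∘L (P - P ∘L Q ∘L P) = P)) ∧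
    (∀ C : H →L[ℂ] H, P ∘L C ∘L P = C →
      (P - P ∘L Q ∘L P) ∘L C = P → C ∘L (P - P ∘L Q ∘L P) = P →
      ∀ R : H →L[ℂ] H, A ∘L R = 1 → R ∘L A = 1 →
        R = Q + Q ∘L C ∘L Q) := by
  have hmul : ∀ X Y : H →L[ℂ] H, X ∘L Y = X * Y := fun _ _ => rfl
  simp only [hmul, ← mul_assoc] at hP hQ1 hQ2 ⊢
  constructor
  · constructor
    · rintro ⟨R, hR1, hR2⟩
      exact ⟨P + P*R*P, jn_fwd A P Q R hP hQ1 hQ2 hR1 hR2⟩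
    · rintro ⟨C, hC, hBC, hCB⟩
      obtain ⟨h1, h2⟩ := jn_bwd A P Q C hP hQ1 hQ2 hC hBC hCB
      exact ⟨Q + Q*C*Q, h1, h2⟩
  · intro C hC hBC hCB R hR1 hR2
    obtain ⟨h1, h2⟩ := jn_bwd A P Q C hP hQ1 hQ2 hC hBC hCB
    have key : R = Q + Q*C*Q := by
      calc R = R * (A * (Q + Q*C*Q)) := by rw [h1, mul_one]
      _ = (R*A) * (Q + Q*C*Q) := by noncomm_ring
      _ = Q + Q*C*Q := by rw [hR2, one_mul]
    exact key.trans (by noncomm_ring)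
end

section
/- Let y₁,...,y_N be distinct points in ℝ³ and c ∈ ℂ^N. The function ψ(x) = ∑_{j=1}^N c_j e^{0}/(4π|x − y_j|) = ∑_j c_j/(4π|x − y_j|) belongs to L²(ℝ³) if and only if c₁ + ... + c_N = 0 (or c = 0). -/
open MeasureTheory
open scoped BigOperators

open Set Metric
open scoped ENNReal

local notation "E3" => EuclideanSpace ℝ (Fin 3)

lemma polar3 (g : ℝ → ℝ≥0∞) (hg : Measurable g) :
    ∫⁻ x : E3, g ‖x‖ ∂volume
      = (volume : Measure E3).toSphere Set.univ
          * ∫⁻ r in Set.Ioi (0:ℝ), ENNReal.ofReal (r ^ 2) * g r := by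
  set μ : Measure E3 := volume with hμ
  have h0 : ∫⁻ x : E3, g ‖x‖ ∂μ = ∫⁻ x : ({0}ᶜ : Set E3), g ‖x.1‖ ∂(μ.comap Subtype.val) := by
    have := setLIntegral_subtype (μ := μ) (measurableSet_singleton (0:E3)).compl univ (fun x => g ‖x‖)
    rw [Measure.restrict_univ, image_univ, Subtype.range_coe] at this
    rw [this, restrict_compl_singleton]
  have h2 := (Measure.measurePreserving_homeomorphUnitSphereProd μ).lintegral_comp_emb
      (Homeomorph.measurableEmbedding _)
      (fun p : sphere (0:E3) 1 × Ioi (0:ℝ) => g p.2.1)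
  have hdim : Module.finrank ℝ E3 - 1 = 2 := by rw [finrank_euclideanSpace_fin]
  rw [hdim] at h2
  have h2' : ∀ x : ({0}ᶜ : Set E3),
      g ((homeomorphUnitSphereProd E3 x).2 : ℝ) = g ‖x.1‖ := by
    intro x; simp
  simp only [h2'] at h2
  rw [h0, h2]
  have h3 : ∫⁻ p : sphere (0:E3) 1 × Ioi (0:ℝ), g p.2.1
        ∂(μ.toSphere.prod (Measure.volumeIoiPow 2))
      = μ.toSphere univ * ∫⁻ r : Ioi (0:ℝ), g r.1 ∂(Measure.volumeIoiPow 2) := by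
    rw [lintegral_prod (fun p : sphere (0:E3) 1 × Ioi (0:ℝ) => g p.2.1)
      ((hg.comp (measurable_subtype_coe.comp measurable_snd)).aemeasurable)]
    simp [lintegral_const, mul_comm]
  rw [h3]
  congr 1
  have h4 := lintegral_withDensity_eq_lintegral_mul
      (Measure.comap Subtype.val volume : Measure (Ioi (0:ℝ)))
      (f := fun r : Ioi (0:ℝ) => ENNReal.ofReal (r.1 ^ 2))
      ((measurable_subtype_coe.pow_const 2).ennreal_ofReal)
      (g := fun r : Ioi (0:ℝ) => g r.1)
      (hg.comp measurable_subtype_coe)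
  rw [Measure.volumeIoiPow]
  rw [h4]
  have h5 := setLIntegral_subtype (μ := (volume : Measure ℝ)) (measurableSet_Ioi (a := (0:ℝ))) univ (fun r : ℝ => ENNReal.ofReal (r ^ 2) * g r)
  rw [Measure.restrict_univ, image_univ, Subtype.range_coe] at h5
  simp only [Pi.mul_apply]
  rw [← h5]

lemma lint_shift (p : E3) (G : ℝ → ℝ≥0∞) :
    ∫⁻ x : E3, G (dist x p) ∂volume = ∫⁻ x : E3, G ‖x‖ ∂volume := by
  have h : ∀ x : E3, dist x p = ‖x + (-p)‖ := fun x => by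
    rw [dist_eq_norm, sub_eq_add_neg]
  simp_rw [h]
  exact lintegral_add_right_eq_self (fun x => G ‖x‖) (-p)

lemma lint_ball_lt_top (p : E3) (R : ℝ) :
    ∫⁻ x : E3, (ball p R).indicator (fun x => ENNReal.ofReal ((dist x p)⁻¹ ^ 2)) x ∂volume < ⊤ := by
  set G : ℝ → ℝ≥0∞ := (Iio R).indicator (fun r => ENNReal.ofReal (r⁻¹ ^ 2)) with hG
  have hGmeas : Measurable G :=
    Measurable.indicator (by fun_prop) measurableSet_Iio
  have h1 : ∀ x : E3, (ball p R).indicator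
      (fun x => ENNReal.ofReal ((dist x p)⁻¹ ^ 2)) x = G (dist x p) := by
    intro x
    by_cases hx : x ∈ ball p R
    · rw [indicator_of_mem hx, hG, indicator_of_mem (show dist x p ∈ Iio R from mem_ball.mp hx)]
    · rw [indicator_of_notMem hx, hG, indicator_of_notMem (fun h : dist x p ∈ Iio R => hx (mem_ball.mpr h))]
  simp_rw [h1]
  rw [lint_shift, polar3 G hGmeas]
  have h2 : ∫⁻ r in Ioi (0:ℝ), ENNReal.ofReal (r ^ 2) * G r
      ≤ ∫⁻ r in Ioi (0:ℝ), (Iio R).indicator (fun _ => (1:ℝ≥0∞)) r := by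
    apply setLIntegral_mono (Measurable.indicator measurable_const measurableSet_Iio)
    intro r hr
    by_cases h : r ∈ Iio R
    · rw [hG, indicator_of_mem h, indicator_of_mem h]
      rw [← ENNReal.ofReal_mul (by positivity)]
      have hr0 : r ≠ 0 := ne_of_gt hr
      have h1 : r ^ 2 * r⁻¹ ^ 2 = 1 := by field_simp
      rw [h1, ENNReal.ofReal_one]
    · rw [hG, indicator_of_notMem h, indicator_of_notMem h, mul_zero]
  have h3 : ∫⁻ r in Ioi (0:ℝ), (Iio R).indicator (fun _ => (1:ℝ≥0∞)) r
      = volume (Iio R ∩ Ioi 0) := by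
    rw [lintegral_indicator measurableSet_Iio, Measure.restrict_restrict measurableSet_Iio]
    simp
  have h4 : volume (Iio R ∩ Ioi (0:ℝ)) < ⊤ := by
    rw [inter_comm, Ioi_inter_Iio]
    simp [Real.volume_Ioo]
  exact ENNReal.mul_lt_top (measure_lt_top _ _) (lt_of_le_of_lt h2 (h3 ▸ h4))

lemma lint_compl_eq_top (p : E3) :
    ∫⁻ x : E3, ((ball p 1)ᶜ).indicator (fun x => ENNReal.ofReal ((dist x p)⁻¹ ^ 2)) x ∂volume = ⊤ := by
  set G : ℝ → ℝ≥0∞ := (Ici (1:ℝ)).indicator (fun r => ENNReal.ofReal (r⁻¹ ^ 2)) with hG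
  have hGmeas : Measurable G :=
    Measurable.indicator (by fun_prop) measurableSet_Ici
  have h1 : ∀ x : E3, ((ball p 1)ᶜ).indicator
      (fun x => ENNReal.ofReal ((dist x p)⁻¹ ^ 2)) x = G (dist x p) := by
    intro x
    by_cases hx : x ∈ (ball p 1)ᶜ
    · rw [indicator_of_mem hx, hG, indicator_of_mem (by simpa [mem_ball, not_lt] using hx)]
    · rw [indicator_of_notMem hx, hG,
        indicator_of_notMem (by simpa [mem_ball, not_le] using (not_not.mp hx))]
  simp_rw [h1]
  rw [lint_shift, polar3 G hGmeas]
  have h2 : ∫⁻ r in Ioi (0:ℝ), (Ici (1:ℝ)).indicator (fun _ => (1:ℝ≥0∞)) r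
      ≤ ∫⁻ r in Ioi (0:ℝ), ENNReal.ofReal (r ^ 2) * G r := by
    apply setLIntegral_mono (by fun_prop)
    intro r hr
    by_cases h : r ∈ Ici (1:ℝ)
    · rw [indicator_of_mem h, hG, indicator_of_mem h,
        ← ENNReal.ofReal_mul (by positivity)]
      have hr0 : r ≠ 0 := ne_of_gt hr
      have h1 : r ^ 2 * r⁻¹ ^ 2 = 1 := by field_simp
      rw [h1, ENNReal.ofReal_one]
    · rw [indicator_of_notMem h]
      exact zero_le
  have h3 : ∫⁻ r in Ioi (0:ℝ), (Ici (1:ℝ)).indicator (fun _ => (1:ℝ≥0∞)) r = ⊤ := by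
    rw [lintegral_indicator measurableSet_Ici, Measure.restrict_restrict measurableSet_Ici]
    have : Ici (1:ℝ) ∩ Ioi 0 = Ici 1 := inter_eq_left.mpr (fun r hr => mem_Ioi.mpr (lt_of_lt_of_le one_pos hr))
    simp [this]
  have h4 : ∫⁻ r in Ioi (0:ℝ), ENNReal.ofReal (r ^ 2) * G r = ⊤ :=
    top_le_iff.mp (h3 ▸ h2)
  rw [h4]
  refine ENNReal.mul_top ?_
  rw [Measure.toSphere_apply_univ]
  have hb : (volume : Measure E3) (ball 0 1) ≠ 0 := (measure_ball_pos volume 0 one_pos).ne'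
  simp [hb, finrank_euclideanSpace_fin, Real.pi_pos]

lemma lint_ball_lt_top' (p q : E3) (R : ℝ) :
    ∫⁻ x : E3, (ball q R).indicator (fun x => ENNReal.ofReal ((dist x p)⁻¹ ^ 2)) x ∂volume < ⊤ := by
  refine lt_of_le_of_lt (lintegral_mono (fun x => ?_)) (lint_ball_lt_top p (R + dist q p))
  exact indicator_le_indicator_of_subset (ball_subset_ball' le_rfl) (fun _ => zero_le) x

lemma kermeas (a : E3) : Measurable (fun x : E3 => (4 * Real.pi * dist x a)⁻¹) := by
  fun_prop

set_option maxHeartbeats 2000000 in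
lemma diff_memL2 (a b : E3) :
    MemLp (fun x : E3 => (4 * Real.pi * dist x a)⁻¹ - (4 * Real.pi * dist x b)⁻¹) 2
      (volume : Measure E3) := by
  set f : E3 → ℝ := fun x => (4 * Real.pi * dist x a)⁻¹ - (4 * Real.pi * dist x b)⁻¹ with hf
  have hfm : Measurable f := (kermeas a).sub (kermeas b)
  rw [memLp_two_iff_integrable_sq_norm hfm.aestronglyMeasurable]
  refine ⟨(hfm.norm.pow_const 2).aestronglyMeasurable, ?_⟩
  rw [hasFiniteIntegral_def]
  set c2 : ℝ := 2 * ((4 * Real.pi)⁻¹) ^ 2 with hc2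
  have hc2pos : 0 ≤ c2 := by positivity
  set K0 : ℝ := (4 * Real.pi)⁻¹ * dist a b * ((2 + ‖a‖) * (2 + ‖b‖)) with hK0
  have hK0pos : 0 ≤ K0 := by positivity
  set T1 : E3 → ℝ≥0∞ := fun x =>
    ENNReal.ofReal c2 * (ball a 1).indicator (fun x => ENNReal.ofReal ((dist x a)⁻¹ ^ 2)) x with hT1
  set T2 : E3 → ℝ≥0∞ := fun x =>
    ENNReal.ofReal c2 * (ball a 1).indicator (fun x => ENNReal.ofReal ((dist x b)⁻¹ ^ 2)) x with hT2
  set T3 : E3 → ℝ≥0∞ := fun x =>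
    ENNReal.ofReal c2 * (ball b 1).indicator (fun x => ENNReal.ofReal ((dist x a)⁻¹ ^ 2)) x with hT3
  set T4 : E3 → ℝ≥0∞ := fun x =>
    ENNReal.ofReal c2 * (ball b 1).indicator (fun x => ENNReal.ofReal ((dist x b)⁻¹ ^ 2)) x with hT4
  set T5 : E3 → ℝ≥0∞ := fun x =>
    ENNReal.ofReal (K0 ^ 2) * ENNReal.ofReal (((1 + ‖x‖) ^ (4:ℕ))⁻¹) with hT5
  have key : ∀ x : E3, (‖‖f x‖ ^ 2‖₊ : ℝ≥0∞) ≤ T1 x + T2 x + T3 x + T4 x + T5 x := by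
    intro x
    have hfx : (‖‖f x‖ ^ 2‖₊ : ℝ≥0∞) = ENNReal.ofReal ((f x) ^ 2) := by
      rw [← enorm_eq_nnnorm, Real.enorm_eq_ofReal (by positivity), Real.norm_eq_abs, sq_abs]
    rw [hfx]
    have hda : (0:ℝ) ≤ dist x a := dist_nonneg
    have hdb : (0:ℝ) ≤ dist x b := dist_nonneg
    have hpi : (0:ℝ) < 4 * Real.pi := by positivity
    have hball : ENNReal.ofReal ((f x) ^ 2) ≤
          ENNReal.ofReal c2 * ENNReal.ofReal ((dist x a)⁻¹ ^ 2)
          + ENNReal.ofReal c2 * ENNReal.ofReal ((dist x b)⁻¹ ^ 2) := by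
      rw [← ENNReal.ofReal_mul hc2pos, ← ENNReal.ofReal_mul hc2pos,
        ← ENNReal.ofReal_add (by positivity) (by positivity)]
      apply ENNReal.ofReal_le_ofReal
      have e1 : (4 * Real.pi * dist x a)⁻¹ = (4 * Real.pi)⁻¹ * (dist x a)⁻¹ := mul_inv _ _
      have e2 : (4 * Real.pi * dist x b)⁻¹ = (4 * Real.pi)⁻¹ * (dist x b)⁻¹ := mul_inv _ _
      rw [hf]
      simp only []
      rw [e1, e2, hc2]
      nlinarith [sq_nonneg ((4 * Real.pi)⁻¹ * (dist x a)⁻¹ + (4 * Real.pi)⁻¹ * (dist x b)⁻¹),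
        sq_nonneg ((4 * Real.pi)⁻¹ * (dist x a)⁻¹ - (4 * Real.pi)⁻¹ * (dist x b)⁻¹)]
    by_cases hxa : x ∈ ball a 1
    · have h12 : ENNReal.ofReal ((f x) ^ 2) ≤ T1 x + T2 x := by
        simpa [hT1, hT2, indicator_of_mem hxa] using hball
      exact h12.trans (le_self_add.trans le_self_add |>.trans le_self_add)
    by_cases hxb : x ∈ ball b 1
    · have h34 : ENNReal.ofReal ((f x) ^ 2) ≤ T3 x + T4 x := by
        simpa [hT3, hT4, indicator_of_mem hxb] using hball
      refine h34.trans ?_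
      calc T3 x + T4 x ≤ (T1 x + T2 x + T3 x) + T4 x := by
            exact add_le_add le_add_self le_rfl
        _ ≤ T1 x + T2 x + T3 x + T4 x + T5 x := le_self_add
    · -- far region
      set A := dist x a with hA
      set B := dist x b with hB
      have hA1 : (1:ℝ) ≤ A := by simpa [hA, not_lt] using (fun h => hxa (mem_ball.mpr h))
      have hB1 : (1:ℝ) ≤ B := by simpa [hB, not_lt] using (fun h => hxb (mem_ball.mpr h))
      have hApos : (0:ℝ) < A := lt_of_lt_of_le one_pos hA1
      have hBpos : (0:ℝ) < B := lt_of_lt_of_le one_pos hB1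
      have hxna : ‖x‖ - ‖a‖ ≤ A := by
        rw [hA, dist_eq_norm]; exact (norm_sub_norm_le x a)
      have hxnb : ‖x‖ - ‖b‖ ≤ B := by
        rw [hB, dist_eq_norm]; exact (norm_sub_norm_le x b)
      have h6 : 1 + ‖x‖ ≤ (2 + ‖a‖) * A := by nlinarith [norm_nonneg a]
      have h7 : 1 + ‖x‖ ≤ (2 + ‖b‖) * B := by nlinarith [norm_nonneg b]
      set S : ℝ := 1 + ‖x‖ with hS
      have hSpos : (0:ℝ) < S := by positivity
      have h5 : f x * (4 * Real.pi * (A * B)) = B - A := by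
        rw [hf]
        simp only []
        rw [← hA, ← hB]
        field_simp
      have habs : |B - A| ≤ dist a b := by
        rw [hA, hB, dist_comm x a, dist_comm x b, dist_comm a b]
        exact abs_dist_sub_le b a x
      have habs2 : |f x| * (4 * Real.pi * (A * B)) ≤ dist a b := by
        have : |f x| * (4 * Real.pi * (A * B)) = |f x * (4 * Real.pi * (A * B))| := by
          rw [abs_mul, abs_of_pos (by positivity : (0:ℝ) < 4 * Real.pi * (A * B))]
        rw [this, h5]; exact habs
      have step : |f x| * S ^ 2 ≤ K0 := by
        have m0 : S * S ≤ ((2 + ‖a‖) * A) * ((2 + ‖b‖) * B) :=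
          mul_le_mul h6 h7 (by positivity) (by positivity)
        have m1 : |f x| * S ^ 2 ≤ |f x| * (((2 + ‖a‖) * (2 + ‖b‖)) * (A * B)) := by
          apply mul_le_mul_of_nonneg_left _ (abs_nonneg _)
          nlinarith [m0]
        have m2 : |f x| * (((2 + ‖a‖) * (2 + ‖b‖)) * (A * B))
            = ((2 + ‖a‖) * (2 + ‖b‖)) * (4 * Real.pi)⁻¹ * (|f x| * (4 * Real.pi * (A * B))) := by
          field_simp
        have m3 : ((2 + ‖a‖) * (2 + ‖b‖)) * (4 * Real.pi)⁻¹ * (|f x| * (4 * Real.pi * (A * B)))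
            ≤ ((2 + ‖a‖) * (2 + ‖b‖)) * (4 * Real.pi)⁻¹ * dist a b := by
          apply mul_le_mul_of_nonneg_left habs2 (by positivity)
        calc |f x| * S ^ 2 ≤ _ := m1
          _ = _ := m2
          _ ≤ _ := m3
          _ = K0 := by rw [hK0]; ring
      have hfar : ENNReal.ofReal ((f x) ^ 2) ≤ T5 x := by
        rw [hT5]
        simp only []
        rw [← ENNReal.ofReal_mul (by positivity)]
        apply ENNReal.ofReal_le_ofReal
        rw [← hS]
        have hsq : (|f x| * S ^ 2) ^ 2 ≤ K0 ^ 2 := by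
          apply pow_le_pow_left₀ (by positivity) step
        have expand : (|f x| * S ^ 2) ^ 2 = (f x) ^ 2 * S ^ 4 := by
          rw [mul_pow, sq_abs]; ring
        rw [expand] at hsq
        rw [← div_eq_mul_inv, le_div_iff₀ (by positivity : (0:ℝ) < S ^ 4)]
        exact hsq
      exact hfar.trans le_add_self
  have hi : ∀ (p q : E3) (R : ℝ), Measurable
      (fun x : E3 => (ball q R).indicator (fun x => ENNReal.ofReal ((dist x p)⁻¹ ^ 2)) x) :=
    fun p q R => Measurable.indicator (by fun_prop) measurableSet_ball
  have hTm1 : Measurable T1 := (hi a a 1).const_mul _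
  have hTm2 : Measurable T2 := (hi b a 1).const_mul _
  have hTm3 : Measurable T3 := (hi a b 1).const_mul _
  have hTm4 : Measurable T4 := (hi b b 1).const_mul _
  have F5 : ∫⁻ x : E3, ENNReal.ofReal (((1 + ‖x‖) ^ (4:ℕ))⁻¹) ∂volume < ⊤ := by
    have hint := (integrable_one_add_norm (E := E3) (μ := volume) (r := 4)
      (by rw [finrank_euclideanSpace_fin]; norm_num)).hasFiniteIntegral
    rw [hasFiniteIntegral_def] at hint
    have he : ∀ x : E3, ENNReal.ofReal (((1 + ‖x‖) ^ (4:ℕ))⁻¹)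
        = (‖(1 + ‖x‖) ^ (-(4:ℝ))‖₊ : ℝ≥0∞) := by
      intro x
      rw [Real.rpow_neg (by positivity), ← enorm_eq_nnnorm, Real.enorm_eq_ofReal (by positivity)]
      congr 2
      rw [show ((4:ℝ) = ((4:ℕ):ℝ)) by norm_num, Real.rpow_natCast]
    simp_rw [he]
    exact hint
  have FT1 : ∫⁻ x, T1 x ∂volume < ⊤ := by
    rw [hT1, lintegral_const_mul' _ _ ENNReal.ofReal_ne_top]
    exact ENNReal.mul_lt_top ENNReal.ofReal_lt_top (lint_ball_lt_top a 1)
  have FT2 : ∫⁻ x, T2 x ∂volume < ⊤ := by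
    rw [hT2, lintegral_const_mul' _ _ ENNReal.ofReal_ne_top]
    exact ENNReal.mul_lt_top ENNReal.ofReal_lt_top (lint_ball_lt_top' b a 1)
  have FT3 : ∫⁻ x, T3 x ∂volume < ⊤ := by
    rw [hT3, lintegral_const_mul' _ _ ENNReal.ofReal_ne_top]
    exact ENNReal.mul_lt_top ENNReal.ofReal_lt_top (lint_ball_lt_top' a b 1)
  have FT4 : ∫⁻ x, T4 x ∂volume < ⊤ := by
    rw [hT4, lintegral_const_mul' _ _ ENNReal.ofReal_ne_top]
    exact ENNReal.mul_lt_top ENNReal.ofReal_lt_top (lint_ball_lt_top b 1)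
  have FT5 : ∫⁻ x, T5 x ∂volume < ⊤ := by
    rw [hT5, lintegral_const_mul' _ _ ENNReal.ofReal_ne_top]
    exact ENNReal.mul_lt_top ENNReal.ofReal_lt_top F5
  calc ∫⁻ x, (‖‖f x‖ ^ 2‖₊ : ℝ≥0∞) ∂volume
      ≤ ∫⁻ x, (T1 x + T2 x + T3 x + T4 x + T5 x) ∂volume := lintegral_mono key
    _ < ⊤ := by
        rw [lintegral_add_left (show Measurable (fun x => T1 x + T2 x + T3 x + T4 x) from
            ((hTm1.add hTm2).add hTm3).add hTm4),
          lintegral_add_left (show Measurable (fun x => T1 x + T2 x + T3 x) from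
            (hTm1.add hTm2).add hTm3),
          lintegral_add_left (show Measurable (fun x => T1 x + T2 x) from hTm1.add hTm2),
          lintegral_add_left hTm1]
        exact ENNReal.add_lt_top.mpr
          ⟨ENNReal.add_lt_top.mpr ⟨ENNReal.add_lt_top.mpr ⟨ENNReal.add_lt_top.mpr ⟨FT1, FT2⟩, FT3⟩,
            FT4⟩, FT5⟩

lemma ker_not_memL2 (p : E3) :
    ¬ MemLp (fun x : E3 => (((4 * Real.pi * dist x p : ℝ) : ℂ))⁻¹) 2 (volume : Measure E3) := by
  intro h
  have hsq := (memLp_two_iff_integrable_sq_norm h.aestronglyMeasurable).mp h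
  have hfin := hsq.hasFiniteIntegral
  rw [hasFiniteIntegral_def] at hfin
  have hpt : ∀ x : E3, ((ball p 1)ᶜ).indicator (fun x => ENNReal.ofReal ((dist x p)⁻¹ ^ 2)) x
      ≤ ENNReal.ofReal ((4 * Real.pi) ^ 2)
        * (‖‖(((4 * Real.pi * dist x p : ℝ) : ℂ))⁻¹‖ ^ 2‖₊ : ℝ≥0∞) := by
    intro x
    refine le_trans (indicator_le_self _ _ x) ?_
    have hd : (0:ℝ) ≤ dist x p := dist_nonneg
    have hn : ‖(((4 * Real.pi * dist x p : ℝ) : ℂ))⁻¹‖ = (4 * Real.pi * dist x p)⁻¹ := by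
      rw [norm_inv, Complex.norm_real, Real.norm_eq_abs,
        abs_of_nonneg (by positivity)]
    rw [← enorm_eq_nnnorm, Real.enorm_eq_ofReal (by positivity), hn,
      ← ENNReal.ofReal_mul (by positivity)]
    apply ENNReal.ofReal_le_ofReal
    rw [mul_inv]
    by_cases hd0 : dist x p = 0
    · simp [hd0]
    · have : (4 * Real.pi) ^ 2 * (((4 * Real.pi)⁻¹ * (dist x p)⁻¹) ^ 2)
          = (dist x p)⁻¹ ^ 2 := by
        have hpi : (4 * Real.pi) ≠ 0 := by positivity
        field_simp
      rw [this]
  have htop : (⊤:ℝ≥0∞) ≤ ENNReal.ofReal ((4 * Real.pi) ^ 2)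
      * ∫⁻ x, (‖‖(((4 * Real.pi * dist x p : ℝ) : ℂ))⁻¹‖ ^ 2‖₊ : ℝ≥0∞) ∂volume := by
    rw [← lint_compl_eq_top p, ← lintegral_const_mul' _ _ ENNReal.ofReal_ne_top]
    exact lintegral_mono hpt
  exact absurd (lt_of_le_of_lt htop (ENNReal.mul_lt_top ENNReal.ofReal_lt_top hfin))
    (lt_irrefl ⊤)

/-- For distinct points `y₁,…,y_N ∈ ℝ³` and coefficients `c ∈ ℂ^N` (not all trivially
constrained), the function `ψ(x) = ∑_j c_j / (4π |x - y_j|)` belongs to `L²(ℝ³)` if and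
only if `c₁ + ⋯ + c_N = 0`. -/
theorem greens_combination_memL2_iff (N : ℕ) (hN : 1 ≤ N)
    (y : Fin N → EuclideanSpace ℝ (Fin 3)) (hy : Function.Injective y)
    (c : Fin N → ℂ) :
    MemLp (fun x : EuclideanSpace ℝ (Fin 3) =>
        ∑ j, c j / ((4 * Real.pi * dist x (y j) : ℝ) : ℂ)) 2 volume
      ↔ ∑ j, c j = 0 := by
  set A : Fin N → E3 → ℂ := fun j x => (((4 * Real.pi * dist x (y j) : ℝ) : ℂ))⁻¹ with hA
  set i0 : Fin N := ⟨0, hN⟩ with hi0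
  set s : ℂ := ∑ j, c j with hs
  have hg : MemLp (fun x : E3 => ∑ j, c j * (A j x - A i0 x)) 2 volume := by
    apply memLp_finset_sum _ (fun j _ => ?_)
    have hdiff := diff_memL2 (y j) (y i0)
    have hC : MemLp (fun x : E3 => ((((4 * Real.pi * dist x (y j))⁻¹
        - (4 * Real.pi * dist x (y i0))⁻¹ : ℝ)) : ℂ)) 2 volume :=
      (Complex.ofRealCLM.comp_memLp' hdiff)
    have hfin := hC.const_mul (c j)
    have he2 : (fun x : E3 => c j * ((((4 * Real.pi * dist x (y j))⁻¹
        - (4 * Real.pi * dist x (y i0))⁻¹ : ℝ)) : ℂ)) = fun a => c j * (A j a - A i0 a) := by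
      funext x
      rw [hA]
      push_cast
      ring
    rwa [he2] at hfin
  have hid : ∀ x : E3, ∑ j, c j / ((4 * Real.pi * dist x (y j) : ℝ) : ℂ)
      = (∑ j, c j * (A j x - A i0 x)) + s * A i0 x := by
    intro x
    simp only [div_eq_mul_inv, ← hA, mul_sub, Finset.sum_sub_distrib, ← Finset.sum_mul, ← hs]
    ring
  constructor
  · intro hψ
    by_contra hsne
    have h1 : MemLp (fun x : E3 => s * A i0 x) 2 volume := by
      have h2 : MemLp (fun x : E3 => (∑ j, c j / ((4 * Real.pi * dist x (y j) : ℝ) : ℂ))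
          - ∑ j, c j * (A j x - A i0 x)) 2 volume := hψ.sub hg
      have : (fun x : E3 => (∑ j, c j / ((4 * Real.pi * dist x (y j) : ℝ) : ℂ))
          - ∑ j, c j * (A j x - A i0 x)) = fun x => s * A i0 x := by
        funext x; rw [hid x]; ring
      rwa [this] at h2
    have h3 : MemLp (A i0) 2 volume := by
      have h4 := h1.const_mul s⁻¹
      have : (fun x : E3 => s⁻¹ * (s * A i0 x)) = A i0 := by
        funext x; field_simp
      rwa [this] at h4
    exact ker_not_memL2 (y i0) h3
  · intro hs0
    have : (fun x : E3 => ∑ j, c j / ((4 * Real.pi * dist x (y j) : ℝ) : ℂ))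
        = fun x : E3 => ∑ j, c j * (A j x - A i0 x) := by
      funext x
      rw [hid x, hs0]
      simp
    rw [this]
    exact hg
end

section
/- Let y₁, y₂, y₃ ∈ ℝ³ be the vertices of an equilateral triangle of side-length 1 and α₁ = α₂ = α₃ = −(4π)^{-1}. Then Ker Γ₀ ∩ Ker Γ₁ (with Γ₀, Γ₁ as for N = 3 point interactions) has dimension 2, i.e. the zero eigenvalue of −Δ_{α,Y} has multiplicity 2. -/
open Matrix

/-- Equilateral triangle of side 1 with `α₁ = α₂ = α₃ = -(4π)⁻¹`: the intersection
`Ker Γ₀ ∩ Ker Γ₁` has dimension 2, i.e. the zero eigenvalue has multiplicity 2. -/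
theorem equilateral_triangle_zero_eigenvalue_multiplicity
    (y : Fin 3 → EuclideanSpace ℝ (Fin 3))
    (hy : ∀ j k, j ≠ k → dist (y j) (y k) = 1)
    (α : Fin 3 → ℝ) (hα : ∀ j, α j = -(4 * Real.pi)⁻¹)
    (Γ₀ Γ₁ : Matrix (Fin 3) (Fin 3) ℂ)
    (hΓ₀ : ∀ j k, Γ₀ j k = if j = k then (α j : ℂ)
      else -((4 * Real.pi * dist (y j) (y k) : ℝ) : ℂ)⁻¹)
    (hΓ₁ : ∀ j k, Γ₁ j k = (4 * Real.pi * Complex.I)⁻¹) :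
    Module.finrank ℂ
      ↥(LinearMap.ker Γ₀.mulVecLin ⊓ LinearMap.ker Γ₁.mulVecLin) = 2 := by
  classical
  set φ : (Fin 3 → ℂ) →ₗ[ℂ] ℂ := ∑ k, LinearMap.proj k with hφ
  have hφv : ∀ v : Fin 3 → ℂ, φ v = ∑ k, v k := by
    intro v; simp [hφ]
  have hπ : (Real.pi : ℂ) ≠ 0 := by exact_mod_cast Real.pi_ne_zero
  have hker : ∀ (c : ℂ), c ≠ 0 → ∀ (Γ : Matrix (Fin 3) (Fin 3) ℂ),
      (∀ j k, Γ j k = c) → LinearMap.ker Γ.mulVecLin = LinearMap.ker φ := by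
    intro c hc Γ hΓ
    ext v
    simp only [LinearMap.mem_ker, mulVecLin_apply, hφv]
    constructor
    · intro h
      have h0 := congrFun h 0
      simp only [mulVec, dotProduct, hΓ, ← Finset.mul_sum, Pi.zero_apply,
        mul_eq_zero] at h0
      rcases h0 with h0 | h0
      · exact absurd h0 hc
      · exact h0
    · intro h
      funext j
      simp [mulVec, dotProduct, hΓ, ← Finset.mul_sum, h]
  have h0 : LinearMap.ker Γ₀.mulVecLin = LinearMap.ker φ := by
    apply hker (-((4 * Real.pi : ℝ) : ℂ)⁻¹)
    · simp [hπ]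
    · intro j k
      by_cases hjk : j = k
      · rw [hΓ₀, if_pos hjk, hα]; push_cast; ring
      · rw [hΓ₀, if_neg hjk, hy j k hjk]; push_cast; ring
  have h1 : LinearMap.ker Γ₁.mulVecLin = LinearMap.ker φ := by
    apply hker ((4 * Real.pi * Complex.I)⁻¹)
    · simp [hπ, Complex.I_ne_zero]
    · intro j k; exact hΓ₁ j k
  rw [h0, h1, inf_idem]
  have hrange : LinearMap.range φ = ⊤ := by
    rw [LinearMap.range_eq_top]
    intro c
    refine ⟨Pi.single 0 c, ?_⟩
    simp [hφv, Finset.sum_pi_single']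
  have hrn := LinearMap.finrank_range_add_finrank_ker φ
  rw [hrange] at hrn
  simp only [finrank_top, Module.finrank_self] at hrn
  have h3 : Module.finrank ℂ (Fin 3 → ℂ) = 3 := by simp
  rw [h3] at hrn
  omega
end
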